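/- Fix λ ∈ [0,1] and a sequence of nonnegative reals ρ_1, ρ_2, …. For every t ≥ 0 and every j ∈ {0, 1, …, t}, the Retrace trace satisfies ∏_{k=1}^{t} λ min(1, ρ_k) ≤ λ^{t−j} ∏_{k=t−j+1}^{t} ρ_k. Consequently, the Retrace trace never exceeds the RBIS trace: ∏_{k=1}^{t} λ min(1, ρ_k) ≤ β_t for all t, where β_0 = 1 and β_t = min(λ^t, β_{t−1} ρ_t). -/

import Mathlib

open scoped BigOperators

/-- for every `t` and `j ≤ t`, the Retrace trace `∏_{k=1}^t λ min(1, ρ_k)`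
is at most `λ^{t−j} ∏_{k=t−j+1}^{t} ρ_k`; consequently the Retrace trace never exceeds
the RBIS trace `β_t` (with `β_0 = 1`, `β_t = min(λ^t, β_{t−1} ρ_t)`). -/
theorem stmt14 (lam : ℝ) (hlam : lam ∈ Set.Icc (0 : ℝ) 1)
    (ρ : ℕ → ℝ) (hρ : ∀ k, 0 ≤ ρ k)
    (β : ℕ → ℝ) (hβ0 : β 0 = 1)
    (hβ : ∀ t : ℕ, β (t + 1) = min (lam ^ (t + 1)) (β t * ρ (t + 1))) :
    (∀ t : ℕ, ∀ j ≤ t,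
      ∏ k ∈ Finset.Icc 1 t, lam * min 1 (ρ k) ≤
        lam ^ (t - j) * ∏ k ∈ Finset.Icc (t - j + 1) t, ρ k) ∧
    ∀ t : ℕ, ∏ k ∈ Finset.Icc 1 t, lam * min 1 (ρ k) ≤ β t := by
  obtain ⟨hl0, hl1⟩ := hlam
  have hmin0 : ∀ k, 0 ≤ min 1 (ρ k) := fun k => le_min zero_le_one (hρ k)
  have main : ∀ t : ℕ, ∀ j ≤ t,
      ∏ k ∈ Finset.Icc 1 t, lam * min 1 (ρ k) ≤
        lam ^ (t - j) * ∏ k ∈ Finset.Icc (t - j + 1) t, ρ k := by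
    intro t j hj
    have h1 : ∏ k ∈ Finset.Icc 1 t, lam * min 1 (ρ k)
        = lam ^ t * ∏ k ∈ Finset.Icc 1 t, min 1 (ρ k) := by
      rw [Finset.prod_mul_distrib, Finset.prod_const, Nat.card_Icc]
      simp
    rw [h1]
    have hsplit : (∏ k ∈ Finset.Icc 1 t, min 1 (ρ k))
        = (∏ k ∈ Finset.Ioc 0 (t - j), min 1 (ρ k)) *
          ∏ k ∈ Finset.Ioc (t - j) t, min 1 (ρ k) := by
      rw [Finset.prod_Ioc_consecutive _ (Nat.zero_le _) (Nat.sub_le _ _)]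
      rw [← Finset.Icc_add_one_left_eq_Ioc]
      rfl
    have hIcc : (∏ k ∈ Finset.Icc (t - j + 1) t, ρ k)
        = ∏ k ∈ Finset.Ioc (t - j) t, ρ k := by
      rw [← Finset.Icc_add_one_left_eq_Ioc]
    rw [hsplit, hIcc]
    have h2 : (∏ k ∈ Finset.Ioc 0 (t - j), min 1 (ρ k)) ≤ 1 :=
      Finset.prod_le_one (fun i _ => hmin0 i) (fun i _ => min_le_left _ _)
    have h3 : (∏ k ∈ Finset.Ioc (t - j) t, min 1 (ρ k)) ≤
        ∏ k ∈ Finset.Ioc (t - j) t, ρ k :=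
      Finset.prod_le_prod (fun i _ => hmin0 i) (fun i _ => min_le_right _ _)
    have hB0 : (0:ℝ) ≤ ∏ k ∈ Finset.Ioc (t - j) t, min 1 (ρ k) :=
      Finset.prod_nonneg fun i _ => hmin0 i
    have hρ0 : (0:ℝ) ≤ ∏ k ∈ Finset.Ioc (t - j) t, ρ k :=
      Finset.prod_nonneg fun i _ => hρ i
    have hAB : (∏ k ∈ Finset.Ioc 0 (t - j), min 1 (ρ k)) *
        (∏ k ∈ Finset.Ioc (t - j) t, min 1 (ρ k)) ≤
        ∏ k ∈ Finset.Ioc (t - j) t, ρ k :=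
      le_trans (mul_le_of_le_one_left hB0 h2) h3
    have hAB0 : (0:ℝ) ≤ (∏ k ∈ Finset.Ioc 0 (t - j), min 1 (ρ k)) *
        (∏ k ∈ Finset.Ioc (t - j) t, min 1 (ρ k)) :=
      mul_nonneg (Finset.prod_nonneg fun i _ => hmin0 i) hB0
    have hpow : lam ^ t ≤ lam ^ (t - j) :=
      pow_le_pow_of_le_one hl0 hl1 (Nat.sub_le t j)
    exact mul_le_mul hpow hAB hAB0 (pow_nonneg hl0 _)
  refine ⟨main, ?_⟩
  intro t
  induction t with
  | zero => simp [hβ0]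
  | succ t ih =>
    have hP0 : (0:ℝ) ≤ ∏ k ∈ Finset.Icc 1 t, lam * min 1 (ρ k) :=
      Finset.prod_nonneg fun i _ => mul_nonneg hl0 (hmin0 i)
    have hstep : ∏ k ∈ Finset.Icc 1 (t + 1), lam * min 1 (ρ k)
        = (∏ k ∈ Finset.Icc 1 t, lam * min 1 (ρ k)) * (lam * min 1 (ρ (t + 1))) :=
      Finset.prod_Icc_succ_top (Nat.succ_le_succ (Nat.zero_le t)) _
    rw [hβ t]
    refine le_min ?_ ?_
    · have := main (t + 1) 0 (Nat.zero_le _)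
      simpa [Finset.Icc_eq_empty_of_lt (Nat.lt_succ_self (t + 1))] using this
    · rw [hstep]
      have h1 : lam * min 1 (ρ (t + 1)) ≤ ρ (t + 1) :=
        le_trans (mul_le_of_le_one_left (hmin0 _) hl1) (min_le_right _ _)
      exact mul_le_mul ih h1 (mul_nonneg hl0 (hmin0 _)) (le_trans hP0 ih)
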